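/- Let p ∈ (0,1), A ∈ (0,1), B > 1 with ρ = (1 + (1-p)Aᵏ)/(p·Bᵏ) < 1 for some integer k. If ξ: [0,∞) → ℝ is continuous, satisfies ξ(s) = p·ξ(Bs) + (1-p)·ξ(As) for all s ≥ 0, and ∫₀^∞ |ξ(s)|/s^{k+1} ds < ∞, then ξ(s) = 0 for all s ≥ 0. -/

import Mathlib

open MeasureTheory Set

theorem stmt_9 (p A B ρ : ℝ) (k : ℕ) (hp : p ∈ Set.Ioo (0:ℝ) 1) (hA : A ∈ Set.Ioo (0:ℝ) 1)
    (hB : 1 < B) (hρ : ρ = (1 + (1 - p) * A ^ k) / (p * B ^ k)) (hρ1 : ρ < 1)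
    (ξ : ℝ → ℝ) (hcont : ContinuousOn ξ (Ici 0))
    (heq : ∀ s : ℝ, 0 ≤ s → ξ s = p * ξ (B * s) + (1 - p) * ξ (A * s))
    (hint : IntegrableOn (fun s => |ξ s| / s ^ (k + 1)) (Ioi 0)) :
    ∀ s : ℝ, 0 ≤ s → ξ s = 0 := by
  obtain ⟨hp0, hp1⟩ := hp
  obtain ⟨hA0, hA1⟩ := hA
  have hB0 : (0:ℝ) < B := lt_trans one_pos hB
  set f : ℝ → ℝ := fun s => |ξ s| / s ^ (k + 1) with hf
  set I : ℝ := ∫ s in Ioi 0, f s with hI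
  -- scaling lemma
  have key : ∀ c : ℝ, 0 < c →
      IntegrableOn (fun s => |ξ (c * s)| / s ^ (k + 1)) (Ioi 0) ∧
      (∫ s in Ioi 0, |ξ (c * s)| / s ^ (k + 1)) = c ^ k * I := by
    intro c hc
    have hck : (0:ℝ) < c ^ (k + 1) := pow_pos hc _
    have hfun : (fun s => |ξ (c * s)| / s ^ (k + 1)) =
        fun s => c ^ (k + 1) * f (c * s) := by
      funext s
      simp only [hf, mul_pow]
      rw [mul_div_assoc']
      rw [mul_div_mul_left _ _ (ne_of_gt hck)]
    have hI1 : IntegrableOn (fun s => f (c * s)) (Ioi 0) := by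
      have := (integrableOn_Ioi_comp_mul_left_iff f 0 hc).mpr
      simpa using this (by simpa using hint)
    have hI2 : IntegrableOn (fun s => |ξ (c * s)| / s ^ (k + 1)) (Ioi 0) := by
      rw [hfun]; exact hI1.const_mul _
    refine ⟨hI2, ?_⟩
    rw [hfun]
    rw [integral_const_mul]
    rw [integral_comp_mul_left_Ioi f 0 hc]
    simp only [mul_zero, smul_eq_mul]
    rw [← hI]
    rw [← mul_assoc, pow_succ]
    field_simp
  -- pointwise bound
  have hb : ∀ s : ℝ, 0 ≤ s →
      |ξ s| ≤ p⁻¹ * |ξ (B⁻¹ * s)| + p⁻¹ * (1 - p) * |ξ (A * B⁻¹ * s)| := by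
    intro s hs
    have h1 := heq (B⁻¹ * s) (by positivity)
    rw [show B * (B⁻¹ * s) = s by field_simp, show A * (B⁻¹ * s) = A * B⁻¹ * s by ring] at h1
    have h2 : p * ξ s = ξ (B⁻¹ * s) - (1 - p) * ξ (A * B⁻¹ * s) := by linarith
    have e2 : |(1 - p) * ξ (A * B⁻¹ * s)| = (1 - p) * |ξ (A * B⁻¹ * s)| := by
      rw [abs_mul]
      congr 1
      exact abs_of_pos (by linarith)
    have h3 : p * |ξ s| ≤ |ξ (B⁻¹ * s)| + (1 - p) * |ξ (A * B⁻¹ * s)| := by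
      calc p * |ξ s| = |p * ξ s| := by rw [abs_mul, abs_of_pos hp0]
        _ = |ξ (B⁻¹ * s) - (1 - p) * ξ (A * B⁻¹ * s)| := by rw [h2]
        _ ≤ |ξ (B⁻¹ * s)| + |(1 - p) * ξ (A * B⁻¹ * s)| := abs_sub _ _
        _ = |ξ (B⁻¹ * s)| + (1 - p) * |ξ (A * B⁻¹ * s)| := by rw [e2]
    have h4 := mul_le_mul_of_nonneg_left h3 (le_of_lt (inv_pos.mpr hp0))
    calc |ξ s| = p⁻¹ * (p * |ξ s|) := by field_simp
      _ ≤ p⁻¹ * (|ξ (B⁻¹ * s)| + (1 - p) * |ξ (A * B⁻¹ * s)|) := h4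
      _ = p⁻¹ * |ξ (B⁻¹ * s)| + p⁻¹ * (1 - p) * |ξ (A * B⁻¹ * s)| := by ring
  have hc1 : (0:ℝ) < B⁻¹ := inv_pos.mpr hB0
  have hc2 : (0:ℝ) < A * B⁻¹ := by positivity
  obtain ⟨hi1, he1⟩ := key B⁻¹ hc1
  obtain ⟨hi2, he2⟩ := key (A * B⁻¹) hc2
  -- the contraction inequality
  have hIle : I ≤ ρ * I := by
    have hmono : I ≤ ∫ s in Ioi 0,
        (p⁻¹ * (|ξ (B⁻¹ * s)| / s ^ (k + 1)) +
         p⁻¹ * (1 - p) * (|ξ (A * B⁻¹ * s)| / s ^ (k + 1))) := by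
      refine integral_mono_ae hint ((hi1.const_mul _).add (hi2.const_mul _)) ?_
      refine (ae_restrict_iff' measurableSet_Ioi).mpr (ae_of_all _ fun s hs => ?_)
      have hs0 : (0:ℝ) < s := hs
      have hsk : (0:ℝ) < s ^ (k + 1) := pow_pos hs0 _
      have := hb s (le_of_lt hs0)
      simp only [hf]
      calc |ξ s| / s ^ (k + 1)
          ≤ (p⁻¹ * |ξ (B⁻¹ * s)| + p⁻¹ * (1 - p) * |ξ (A * B⁻¹ * s)|) / s ^ (k + 1) :=
            (div_le_div_iff_of_pos_right hsk).mpr this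
        _ = p⁻¹ * (|ξ (B⁻¹ * s)| / s ^ (k + 1)) +
            p⁻¹ * (1 - p) * (|ξ (A * B⁻¹ * s)| / s ^ (k + 1)) := by
            rw [add_div]; ring
    have hsplit : (∫ s in Ioi 0,
        (p⁻¹ * (|ξ (B⁻¹ * s)| / s ^ (k + 1)) +
         p⁻¹ * (1 - p) * (|ξ (A * B⁻¹ * s)| / s ^ (k + 1)))) =
        p⁻¹ * ((B⁻¹) ^ k * I) + p⁻¹ * (1 - p) * ((A * B⁻¹) ^ k * I) := by
      rw [integral_add (hi1.const_mul _) (hi2.const_mul _), integral_const_mul,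
        integral_const_mul, he1, he2]
    have hrho : p⁻¹ * ((B⁻¹) ^ k * I) + p⁻¹ * (1 - p) * ((A * B⁻¹) ^ k * I) = ρ * I := by
      rw [hρ]
      have hBk : (0:ℝ) < B ^ k := pow_pos hB0 _
      field_simp
      have hBB : B ^ k * B⁻¹ ^ k = 1 := by rw [← mul_pow, mul_inv_cancel₀ hB0.ne', one_pow]
      linear_combination (I - I * p * A ^ k + I * A ^ k) * hBB
    rw [hsplit, hrho] at hmono
    exact hmono
  have hI0 : 0 ≤ I := by
    refine setIntegral_nonneg measurableSet_Ioi fun s hs => ?_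
    have : (0:ℝ) < s := hs
    positivity
  have hIeq : I = 0 := by nlinarith
  -- f = 0 a.e. on Ioi 0
  have hae : f =ᵐ[volume.restrict (Ioi 0)] 0 := by
    refine (integral_eq_zero_iff_of_nonneg_ae ?_ hint).mp hIeq
    refine (ae_restrict_iff' measurableSet_Ioi).mpr (ae_of_all _ fun s hs => ?_)
    have : (0:ℝ) < s := hs
    simp only [hf, Pi.zero_apply]
    positivity
  -- ξ = 0 on Ioi 0
  have hzero : ∀ s : ℝ, 0 < s → ξ s = 0 := by
    set S : Set ℝ := Ioi 0 ∩ ξ ⁻¹' ({0}ᶜ) with hS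
    have hSopen : IsOpen S :=
      (hcont.mono (Ioi_subset_Ici le_rfl)).isOpen_inter_preimage isOpen_Ioi isOpen_compl_singleton
    have hSsub : S ⊆ {s | ¬ f s = 0} := by
      rintro s ⟨hs1, hs2⟩
      have hs0 : (0:ℝ) < s := hs1
      have hξ : ξ s ≠ 0 := hs2
      have : 0 < f s := by
        simp only [hf]
        have : 0 < |ξ s| := abs_pos.mpr hξ
        positivity
      exact ne_of_gt this
    have h1 : (volume.restrict (Ioi 0)) {s | ¬ f s = 0} = 0 := by
      have := hae
      rw [Filter.EventuallyEq, ae_iff] at this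
      simpa using this
    have h2 : (volume.restrict (Ioi 0)) S = 0 := measure_mono_null hSsub h1
    rw [Measure.restrict_apply hSopen.measurableSet,
      inter_eq_left.mpr (inter_subset_left)] at h2
    have hSempty : S = ∅ := (hSopen.measure_eq_zero_iff volume).mp h2
    intro s hs
    by_contra hne
    have : s ∈ S := ⟨hs, hne⟩
    rw [hSempty] at this
    exact this
  intro s hs
  rcases eq_or_lt_of_le hs with h | h
  · -- s = 0 case, by continuity
    subst h
    symm
    have hc0 : Filter.Tendsto ξ (nhdsWithin 0 (Ici 0)) (nhds (ξ 0)) :=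
      hcont 0 self_mem_Ici
    have h2 : Filter.Tendsto ξ (nhdsWithin 0 (Ioi 0)) (nhds (ξ 0)) :=
      hc0.mono_left (nhdsWithin_mono 0 (Ioi_subset_Ici le_rfl))
    have h3 : Filter.Tendsto ξ (nhdsWithin 0 (Ioi 0)) (nhds 0) := by
      refine Filter.Tendsto.congr' ?_ tendsto_const_nhds
      exact (eventually_nhdsWithin_of_forall fun x hx => (hzero x hx).symm)
    exact tendsto_nhds_unique h3 h2
  · exact hzero s h
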